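/- Let X be a Markov chain with finite state space S and stationary distribution π. Then for any state y and any integer t > 0, P_π(τ(y) = t) ≤ 1/t, where P_π denotes the law of the chain whose initial state is sampled from π. In particular, for any state x with π(x) > 0, P_x(τ(y) = t) ≤ 1/(t·π(x)). -/

import Mathlib

open Finset

/-- A (row-)stochastic transition matrix: the transition kernel of a Markov chain
on the finite state space `S`. -/
def IsStochastic {S : Type*} [Fintype S] (p : Matrix S S ℝ) : Prop :=
  (∀ a b, 0 ≤ p a b) ∧ ∀ a, ∑ b, p a b = 1

/-- `π` is a stationary distribution for the transition matrix `p`. -/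
def IsStationaryDistribution {S : Type*} [Fintype S] (p : Matrix S S ℝ) (π : S → ℝ) : Prop :=
  (∀ a, 0 ≤ π a) ∧ (∑ a, π a = 1) ∧ ∀ b, ∑ a, π a * p a b = π b

/-- The chain with transition matrix `p` is reversible with respect to `π`. -/
def IsReversible {S : Type*} [Fintype S] (p : Matrix S S ℝ) (π : S → ℝ) : Prop :=
  ∀ a b, π a * p a b = π b * p b a

/-- The probability weight of a finite trajectory `z 0, z 1, …, z m` of the chain. -/
noncomputable def pathWeight {S : Type*} (p : Matrix S S ℝ) {m : ℕ} (z : Fin (m + 1) → S) : ℝ :=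
  ∏ i : Fin m, p (z i.castSucc) (z i.succ)

open scoped Classical in
/-- `P_x(A)` for an event `A` depending on the trajectory `X_0, X_1, …, X_m`
of the chain started at `x`. -/
noncomputable def eventProb {S : Type*} [Fintype S] (p : Matrix S S ℝ) (x : S) (m : ℕ)
    (A : (Fin (m + 1) → S) → Prop) : ℝ :=
  ∑ z : Fin (m + 1) → S, if z 0 = x ∧ A z then pathWeight p z else 0

/-- `P_x(τ(y) = t)`: the probability that the chain started at `x` first visits `y`
exactly at time `t`. -/
noncomputable def hitProbEq {S : Type*} [Fintype S] (p : Matrix S S ℝ) (x y : S) (t : ℕ) : ℝ :=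
  eventProb p x t fun z => z (Fin.last t) = y ∧ ∀ i : Fin (t + 1), (i : ℕ) < t → z i ≠ y

section Aux

set_option linter.unusedSectionVars false

variable {S : Type*} [Fintype S]

/-- Expectation over trajectories started from the distribution `π`. -/
noncomputable def stExp (p : Matrix S S ℝ) (π : S → ℝ) (m : ℕ)
    (f : (Fin (m + 1) → S) → ℝ) : ℝ :=
  ∑ z : Fin (m + 1) → S, π (z 0) * pathWeight p z * f z

lemma pathWeight_nonneg (p : Matrix S S ℝ) (hp : IsStochastic p) {m : ℕ}
    (z : Fin (m + 1) → S) : 0 ≤ pathWeight p z :=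
  Finset.prod_nonneg fun _ _ => hp.1 _ _

lemma pathWeight_snoc (p : Matrix S S ℝ) {m : ℕ} (w : Fin (m + 1) → S) (a : S) :
    pathWeight p (Fin.snoc w a) = pathWeight p w * p (w (Fin.last m)) a := by
  unfold pathWeight
  rw [Fin.prod_univ_castSucc]
  congr 1
  · apply Finset.prod_congr rfl
    intro i _
    rw [Fin.succ_castSucc, Fin.snoc_castSucc, Fin.snoc_castSucc]
  · rw [Fin.succ_last, Fin.snoc_last, Fin.snoc_castSucc]

lemma pathWeight_cons (p : Matrix S S ℝ) {m : ℕ} (w : Fin (m + 1) → S) (a : S) :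
    pathWeight p (Fin.cons a w) = p a (w 0) * pathWeight p w := by
  unfold pathWeight
  rw [Fin.prod_univ_succ]
  congr 1

lemma stExp_snoc (p : Matrix S S ℝ) (π : S → ℝ) (hp : IsStochastic p) (m : ℕ)
    (f : (Fin (m + 1) → S) → ℝ) :
    stExp p π (m + 1) (fun z => f (fun i => z i.castSucc)) = stExp p π m f := by
  unfold stExp
  rw [← Equiv.sum_comp (Fin.snocEquiv (fun _ : Fin (m + 2) => S)), Fintype.sum_prod_type,
    Finset.sum_comm]
  apply Finset.sum_congr rfl
  intro w _
  have h0 : ∀ a : S, (Fin.snoc w a : Fin (m + 2) → S) 0 = w 0 := fun a => by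
    rw [← Fin.castSucc_zero, Fin.snoc_castSucc]
  have hres : ∀ a : S,
      (fun i : Fin (m + 1) => (Fin.snoc w a : Fin (m + 2) → S) i.castSucc) = w := by
    intro a; funext i; rw [Fin.snoc_castSucc]
  calc ∑ a : S, π ((Fin.snoc w a : Fin (m + 2) → S) 0) * pathWeight p (Fin.snoc w a) *
          f (fun i => (Fin.snoc w a : Fin (m + 2) → S) i.castSucc)
      = ∑ a : S, π (w 0) * (pathWeight p w * p (w (Fin.last m)) a) * f w := by
        apply Finset.sum_congr rfl; intro a _
        rw [h0, pathWeight_snoc, hres]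
    _ = (π (w 0) * pathWeight p w * f w) * ∑ a : S, p (w (Fin.last m)) a := by
        rw [Finset.mul_sum]; apply Finset.sum_congr rfl; intro a _; ring
    _ = π (w 0) * pathWeight p w * f w := by rw [hp.2, mul_one]

lemma stExp_cons (p : Matrix S S ℝ) (π : S → ℝ) (hstat : IsStationaryDistribution p π) (m : ℕ)
    (f : (Fin (m + 1) → S) → ℝ) :
    stExp p π (m + 1) (fun z => f (fun i => z i.succ)) = stExp p π m f := by
  unfold stExp
  rw [← Equiv.sum_comp (Fin.consEquiv (fun _ : Fin (m + 2) => S)), Fintype.sum_prod_type,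
    Finset.sum_comm]
  apply Finset.sum_congr rfl
  intro w _
  have hres : ∀ a : S, (fun i : Fin (m + 1) => (Fin.cons a w : Fin (m + 2) → S) i.succ) = w := by
    intro a; funext i; rw [Fin.cons_succ]
  calc ∑ a : S, π ((Fin.cons a w : Fin (m + 2) → S) 0) * pathWeight p (Fin.cons a w) *
          f (fun i => (Fin.cons a w : Fin (m + 2) → S) i.succ)
      = ∑ a : S, (π a * p a (w 0)) * (pathWeight p w * f w) := by
        apply Finset.sum_congr rfl; intro a _
        rw [Fin.cons_zero, pathWeight_cons, hres]; ring
    _ = (∑ a : S, π a * p a (w 0)) * (pathWeight p w * f w) := by rw [Finset.sum_mul]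
    _ = π (w 0) * pathWeight p w * f w := by rw [hstat.2.2]; ring

lemma stExp_one (p : Matrix S S ℝ) (π : S → ℝ) (hp : IsStochastic p) (hstat : IsStationaryDistribution p π) :
    ∀ m : ℕ, stExp p π m (fun _ => 1) = 1 := by
  intro m
  induction m with
  | zero =>
    unfold stExp
    rw [← Equiv.sum_comp (Equiv.funUnique (Fin 1) S).symm]
    simp only [pathWeight, Finset.univ_eq_empty, Finset.prod_empty, mul_one]
    exact hstat.2.1
  | succ n ih =>
    exact (stExp_snoc p π hp n (fun _ => 1)).trans ih

lemma stExp_sum (p : Matrix S S ℝ) (π : S → ℝ) (m : ℕ) {ι : Type*} (s : Finset ι)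
    (f : ι → (Fin (m + 1) → S) → ℝ) :
    ∑ i ∈ s, stExp p π m (f i) = stExp p π m (fun z => ∑ i ∈ s, f i z) := by
  unfold stExp
  rw [Finset.sum_comm]
  apply Finset.sum_congr rfl
  intro z _
  rw [Finset.mul_sum]

lemma stExp_mono (p : Matrix S S ℝ) (π : S → ℝ) (hp : IsStochastic p) (hπ : ∀ a, 0 ≤ π a)
    (m : ℕ) {f f' : (Fin (m + 1) → S) → ℝ} (hle : ∀ z, f z ≤ f' z) :
    stExp p π m f ≤ stExp p π m f' := by
  apply Finset.sum_le_sum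
  intro z _
  exact mul_le_mul_of_nonneg_left (hle z)
    (mul_nonneg (hπ _) (pathWeight_nonneg p hp z))

/-- window extraction -/
def win {t m : ℕ} (s : ℕ) (h : s + t ≤ m) (z : Fin (m + 1) → S) : Fin (t + 1) → S :=
  fun i => z ⟨s + i, by omega⟩

lemma stExp_win (p : Matrix S S ℝ) (π : S → ℝ) (hp : IsStochastic p) (hstat : IsStationaryDistribution p π)
    (t : ℕ) (g : (Fin (t + 1) → S) → ℝ) :
    ∀ m s (h : s + t ≤ m), stExp p π m (fun z => g (win s h z)) = stExp p π t g := by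
  intro m
  induction m with
  | zero =>
    intro s h
    have hs : s = 0 := by omega
    have ht : t = 0 := by omega
    subst hs; subst ht
    apply congrArg
    funext z
    apply congrArg
    funext i
    have : (⟨0 + i, by omega⟩ : Fin 1) = i := by
      apply Fin.ext; simp
    rw [win, this]
  | succ n ih =>
    intro s h
    match s with
    | 0 =>
      by_cases hc : 0 + t ≤ n
      · have key : (fun z : Fin (n + 2) → S => g (win 0 h z)) =
            (fun z : Fin (n + 2) → S => (fun w => g (win 0 hc w)) (fun i => z i.castSucc)) := by
          funext z
          apply congrArg
          funext i
          rfl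
        rw [key, stExp_snoc p π hp n (fun w => g (win 0 hc w)), ih 0 hc]
      · have htn : t = n + 1 := by omega
        subst htn
        apply congrArg
        funext z
        apply congrArg
        funext i
        show z ⟨0 + (i : ℕ), by omega⟩ = z i
        apply congrArg
        apply Fin.ext
        simp
    | (s' + 1) =>
      have hc' : s' + t ≤ n := by omega
      have key : (fun z : Fin (n + 2) → S => g (win (s' + 1) h z)) =
          (fun z : Fin (n + 2) → S => (fun w => g (win s' hc' w)) (fun i => z i.succ)) := by
        funext z
        apply congrArg
        funext i
        show z _ = z (Fin.succ ⟨s' + i, by omega⟩)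
        apply congrArg
        apply Fin.ext
        show s' + 1 + (i : ℕ) = s' + (i : ℕ) + 1
        omega
      rw [key, stExp_cons p π hstat n (fun w => g (win s' hc' w)), ih s' hc']

open scoped Classical in
/-- Indicator of the event `τ(y) = t`. -/
noncomputable def hitInd (y : S) (t : ℕ) : (Fin (t + 1) → S) → ℝ :=
  fun z => if (z (Fin.last t) = y ∧ ∀ i : Fin (t + 1), (i : ℕ) < t → z i ≠ y) then 1 else 0

lemma winDisj {t m : ℕ} (y : S) (z : Fin (m + 1) → S) {s s' : ℕ}
    (hs : s + t ≤ m) (hs' : s' + t ≤ m) (h1 : s < s') (h2 : s' < t)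
    (ha : win s hs z (Fin.last t) = y)
    (hb : ∀ i : Fin (t + 1), (i : ℕ) < t → win s' hs' z i ≠ y) : False := by
  have hi : s + t - s' < t := by omega
  apply hb ⟨s + t - s', by omega⟩ hi
  have : win s' hs' z ⟨s + t - s', by omega⟩ = win s hs z (Fin.last t) := by
    unfold win
    apply congrArg
    apply Fin.ext
    show s' + (s + t - s') = s + (Fin.last t : ℕ)
    rw [Fin.val_last]
    omega
  rw [this, ha]

lemma sum_hit_eq_stExp (p : Matrix S S ℝ) (π : S → ℝ) (hp : IsStochastic p) (y : S) (t : ℕ) :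
    ∑ x, π x * hitProbEq p x y t = stExp p π t (hitInd y t) := by
  classical
  unfold hitProbEq eventProb stExp hitInd
  simp_rw [Finset.mul_sum]
  rw [Finset.sum_comm]
  apply Finset.sum_congr rfl
  intro z _
  by_cases hAz : z (Fin.last t) = y ∧ ∀ i : Fin (t + 1), (i : ℕ) < t → z i ≠ y
  · rw [if_pos hAz, mul_one]
    rw [Finset.sum_eq_single (z 0)
      (fun b _ hb => by rw [if_neg (fun h => hb h.1.symm), mul_zero])
      (fun h => absurd (Finset.mem_univ _) h)]
    rw [if_pos ⟨rfl, hAz⟩]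
  · rw [if_neg hAz, mul_zero]
    apply Finset.sum_eq_zero
    intro x _
    have : ¬ (z 0 = x ∧ (z (Fin.last t) = y ∧ ∀ i : Fin (t + 1), (i : ℕ) < t → z i ≠ y)) := by
      tauto
    rw [if_neg this, mul_zero]

end Aux

/-- Proposition 5: for a chain with stationary distribution `π`, `P_π(τ(y) = t) ≤ 1/t`
for every `t > 0`; in particular `P_x(τ(y) = t) ≤ 1/(t π(x))` whenever `π x > 0`. -/
theorem stationary_surprise_bound {S : Type*} [Fintype S] (p : Matrix S S ℝ) (π : S → ℝ)
    (hp : IsStochastic p) (hstat : IsStationaryDistribution p π) (y : S) (t : ℕ) (ht : 0 < t) :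
    (∑ x, π x * hitProbEq p x y t) ≤ 1 / t ∧
      ∀ x : S, 0 < π x → hitProbEq p x y t ≤ 1 / (t * π x) := by
  classical
  set m : ℕ := t - 1 + t with hm
  have hwin : ∀ s : Fin t, (s : ℕ) + t ≤ m := fun s => by
    have := s.isLt; omega
  have hhit_nonneg : ∀ x : S, 0 ≤ hitProbEq p x y t := by
    intro x
    unfold hitProbEq eventProb
    apply Finset.sum_nonneg
    intro z _
    split
    · exact pathWeight_nonneg p hp z
    · exact le_refl 0
  have hsum : ∑ s : Fin t, stExp p π m (fun z => hitInd y t (win (s : ℕ) (hwin s) z))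
      = (t : ℝ) * stExp p π t (hitInd y t) := by
    have e : ∀ s : Fin t, stExp p π m (fun z => hitInd y t (win (s : ℕ) (hwin s) z))
        = stExp p π t (hitInd y t) :=
      fun s => stExp_win p π hp hstat t (hitInd y t) m (s : ℕ) (hwin s)
    rw [Finset.sum_congr rfl (fun s _ => e s), Finset.sum_const, Finset.card_univ,
      Fintype.card_fin, nsmul_eq_mul]
  have hdisj : ∀ z : Fin (m + 1) → S,
      ∑ s : Fin t, hitInd y t (win (s : ℕ) (hwin s) z) ≤ 1 := by
    intro z
    unfold hitInd
    rw [Finset.sum_boole]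
    rw [show (1 : ℝ) = ((1 : ℕ) : ℝ) by norm_num, Nat.cast_le]
    apply Finset.card_le_one.mpr
    intro s hs s' hs'
    simp only [Finset.mem_filter] at hs hs'
    by_contra hne
    have hne' : (s : ℕ) ≠ (s' : ℕ) := fun h => hne (Fin.ext h)
    rcases lt_or_gt_of_ne hne' with hlt | hlt
    · exact winDisj (s := (s : ℕ)) (s' := (s' : ℕ)) y z (hwin s) (hwin s') hlt s'.isLt
        hs.2.1 hs'.2.2
    · exact winDisj (s := (s' : ℕ)) (s' := (s : ℕ)) y z (hwin s') (hwin s) hlt s.isLt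
        hs'.2.1 hs.2.2
  have htotal : (t : ℝ) * stExp p π t (hitInd y t) ≤ 1 := by
    rw [← hsum, stExp_sum]
    calc stExp p π m (fun z => ∑ s : Fin t, hitInd y t (win (s : ℕ) (hwin s) z))
        ≤ stExp p π m (fun _ => 1) := stExp_mono p π hp hstat.1 m hdisj
      _ = 1 := stExp_one p π hp hstat m
  have htR : (0 : ℝ) < t := by exact_mod_cast ht
  have main : (∑ x, π x * hitProbEq p x y t) ≤ 1 / t := by
    rw [sum_hit_eq_stExp p π hp y t, le_div_iff₀ htR, mul_comm]
    exact htotal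
  refine ⟨main, ?_⟩
  intro x hx
  have hle : π x * hitProbEq p x y t ≤ ∑ x', π x' * hitProbEq p x' y t :=
    Finset.single_le_sum (fun x' _ => mul_nonneg (hstat.1 x') (hhit_nonneg x'))
      (Finset.mem_univ x)
  have hb : π x * hitProbEq p x y t ≤ 1 / t := le_trans hle main
  rw [le_div_iff₀ (by positivity : (0 : ℝ) < (t : ℝ) * π x)]
  calc hitProbEq p x y t * ((t : ℝ) * π x) = (t : ℝ) * (π x * hitProbEq p x y t) := by ring
    _ ≤ (t : ℝ) * (1 / t) := mul_le_mul_of_nonneg_left hb htR.le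
    _ = 1 := by field_simp
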